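/- The number of type B peak pseudo-compositions of n ≥ 1 equals the Fibonacci number f_{n+1}, where f₀ = f₁ = 1 and f_n = f_{n-1} + f_{n-2}. -/

import Mathlib

/-- Fibonacci numbers with `f 0 = f 1 = 1`. -/
def fibP : ℕ → ℕ
  | 0 => 1
  | 1 => 1
  | n + 2 => fibP (n + 1) + fibP n

/-- Condition on reversed lists: all but the last entry positive, middle entries > 1. -/
def Qc (l : List ℕ) : Prop :=
  (∀ x ∈ l.dropLast, 0 < x) ∧ ∀ i, 0 < i → i + 1 < l.length → 1 < l.getD i 0

lemma dropLast_reverse' (l : List ℕ) : l.reverse.dropLast = l.tail.reverse := by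
  have h := List.tail_reverse (l := l.reverse)
  rw [List.reverse_reverse] at h
  rw [h, List.reverse_reverse]

lemma mid_rev {l : List ℕ} (H : ∀ i, 0 < i → i + 1 < l.length → 1 < l.getD i 0) :
    ∀ i, 0 < i → i + 1 < l.reverse.length → 1 < l.reverse.getD i 0 := by
  intro i h1 h2
  rw [List.length_reverse] at h2
  have hi : i < l.reverse.length := by rw [List.length_reverse]; omega
  rw [List.getD_eq_getElem _ _ hi, List.getElem_reverse]
  have := H (l.length - 1 - i) (by omega) (by omega)
  rwa [List.getD_eq_getElem _ _ (by omega)] at this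

lemma cond_rev {l : List ℕ} (h1 : ∀ x ∈ l.tail, 0 < x)
    (h2 : ∀ i, 0 < i → i + 1 < l.length → 1 < l.getD i 0) : Qc l.reverse := by
  refine ⟨?_, mid_rev h2⟩
  intro x hx
  rw [dropLast_reverse', List.mem_reverse] at hx
  exact h1 x hx

lemma cond_rev' {l : List ℕ} (h : Qc l.reverse) :
    (∀ x ∈ l.tail, 0 < x) ∧ ∀ i, 0 < i → i + 1 < l.length → 1 < l.getD i 0 := by
  obtain ⟨h1, h2⟩ := h
  constructor
  · intro x hx
    apply h1
    rw [dropLast_reverse', List.mem_reverse]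
    exact hx
  · have := mid_rev h2
    rwa [List.reverse_reverse] at this

/-- The reversal equivalence between the original set and the `Qc` set. -/
def revEquiv (n : ℕ) :
    {l : List ℕ // (∀ x ∈ l.tail, 0 < x) ∧ l.sum = n ∧
      ∀ i, 0 < i → i + 1 < l.length → 1 < l.getD i 0} ≃
    {l : List ℕ // Qc l ∧ l.sum = n} :=
  Equiv.subtypeEquiv List.reverse_involutive.toPerm (by
    intro l
    constructor
    · rintro ⟨ha, hs, hb⟩
      refine ⟨cond_rev ha hb, ?_⟩
      show l.reverse.sum = n
      rw [List.sum_reverse]; exact hs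
    · rintro ⟨hq, hs⟩
      obtain ⟨ha, hb⟩ := cond_rev' hq
      have hs' : l.reverse.sum = n := hs
      rw [List.sum_reverse] at hs'
      exact ⟨ha, hs', hb⟩)

lemma length_le_sum_of_pos : ∀ (l : List ℕ), (∀ x ∈ l, 0 < x) → l.length ≤ l.sum
  | [], _ => le_refl _
  | a :: t, h => by
    simp only [List.length_cons, List.sum_cons]
    have ha := h a (by simp)
    have := length_le_sum_of_pos t (fun x hx => h x (by simp [hx]))
    omega

lemma sum_dropLast_le (l : List ℕ) : l.dropLast.sum ≤ l.sum := by
  rcases eq_or_ne l [] with rfl | hne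
  · simp
  · conv_rhs => rw [← List.dropLast_concat_getLast hne]
    rw [List.sum_append]
    simp

instance finT (n : ℕ) : Finite {l : List ℕ // Qc l ∧ l.sum = n} := by
  have hlen : ∀ l : List ℕ, Qc l → l.sum = n → l.length < n + 2 := by
    intro l hq hs
    have h1 := length_le_sum_of_pos l.dropLast hq.1
    have h2 := sum_dropLast_le l
    have h3 : l.dropLast.length = l.length - 1 := List.length_dropLast (xs := l)
    omega
  have helt : ∀ l : List ℕ, Qc l → l.sum = n → ∀ i : ℕ, l.getD i 0 < n + 1 := by
    intro l hq hs i
    rcases lt_or_ge i l.length with hi | hi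
    · rw [List.getD_eq_getElem _ _ hi]
      have : l[i] ≤ l.sum := List.le_sum_of_mem (List.getElem_mem hi)
      omega
    · rw [List.getD_eq_default _ _ hi]
      omega
  apply Finite.of_injective (β := Fin (n + 2) × (Fin (n + 2) → Fin (n + 1)))
    (f := fun x => (⟨x.1.length, hlen x.1 x.2.1 x.2.2⟩,
      fun i => ⟨x.1.getD i 0, helt x.1 x.2.1 x.2.2 i⟩))
  intro x y h
  simp only [Prod.mk.injEq, Fin.mk.injEq] at h
  obtain ⟨hlen', hfun⟩ := h
  refine Subtype.ext (List.ext_getElem hlen' ?_)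
  intro i hi hi'
  have hL := hlen x.1 x.2.1 x.2.2
  have := congrFun hfun ⟨i, by omega⟩
  simp only [Fin.mk.injEq] at this
  rwa [List.getD_eq_getElem _ _ hi, List.getD_eq_getElem _ _ hi'] at this

def incHead : List ℕ → List ℕ
  | [] => []
  | a :: t => (a + 1) :: t

lemma head_pos {a m : ℕ} {t : List ℕ} (hq : Qc (a :: t)) (hs : (a :: t).sum = m + 1) :
    1 ≤ a := by
  rcases t with _ | ⟨b, t'⟩
  · simp at hs; omega
  · exact hq.1 a (by rw [List.dropLast_cons₂]; simp)

lemma key1 {m : ℕ} (l : List ℕ) (hq : Qc l) (hs : l.sum = m + 1) :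
    Qc (incHead l) ∧ (incHead l).sum = m + 2 := by
  rcases l with _ | ⟨a, t⟩
  · simp at hs
  · refine ⟨⟨?_, ?_⟩, ?_⟩
    · intro x hx
      rcases t with _ | ⟨b, t'⟩
      · simp [incHead] at hx
      · rw [show incHead (a :: b :: t') = (a+1) :: b :: t' from rfl,
          List.dropLast_cons₂] at hx
        rcases List.mem_cons.mp hx with rfl | hx
        · omega
        · exact hq.1 x (by rw [List.dropLast_cons₂]; simp [hx])
    · intro i h1 h2
      obtain ⟨j, rfl⟩ : ∃ j, i = j + 1 := ⟨i - 1, by omega⟩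
      have := hq.2 (j + 1) (by omega) (by simpa [incHead] using h2)
      simpa [incHead] using this
    · simp only [incHead, List.sum_cons] at hs ⊢
      omega

lemma key2 {m : ℕ} (l : List ℕ) (hq : Qc l) (hs : l.sum = m + 1) :
    Qc (1 :: incHead l) ∧ (1 :: incHead l).sum = m + 3 := by
  obtain ⟨hq', hs'⟩ := key1 l hq hs
  rcases l with _ | ⟨a, t⟩
  · simp at hs
  · have ha : 1 ≤ a := head_pos hq hs
    refine ⟨⟨?_, ?_⟩, ?_⟩
    · intro x hx
      rw [show (1 :: incHead (a :: t)) = 1 :: (a+1) :: t from rfl,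
        List.dropLast_cons₂] at hx
      rcases List.mem_cons.mp hx with rfl | hx
      · omega
      · exact hq'.1 x hx
    · intro i h1 h2
      obtain ⟨j, rfl⟩ : ∃ j, i = j + 1 := ⟨i - 1, by omega⟩
      rcases j with _ | k
      · show 1 < (incHead (a :: t)).getD 0 0
        simp [incHead]; omega
      · show 1 < (incHead (a :: t)).getD (k + 1) 0
        simp only [List.length_cons] at h2
        have := hq.2 (k + 1) (by omega) (by simp [incHead] at h2 ⊢; omega)
        simpa [incHead] using this
    · simp only [List.sum_cons] at hs' ⊢
      omega

def gmap (n : ℕ) :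
    {l : List ℕ // Qc l ∧ l.sum = n + 2} ⊕ {l : List ℕ // Qc l ∧ l.sum = n + 1} →
    {l : List ℕ // Qc l ∧ l.sum = n + 3} :=
  Sum.elim
    (fun x => ⟨incHead x.1, key1 x.1 x.2.1 x.2.2⟩)
    (fun x => ⟨1 :: incHead x.1, key2 x.1 x.2.1 x.2.2⟩)

lemma gmap_bij (n : ℕ) : Function.Bijective (gmap n) := by
  constructor
  · rintro (⟨l, hl⟩ | ⟨l, hl⟩) (⟨m, hm⟩ | ⟨m, hm⟩) h <;>
      simp only [gmap, Sum.elim_inl, Sum.elim_inr, Subtype.mk.injEq] at h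
    · rcases l with _ | ⟨a, t⟩; · simp at hl
      rcases m with _ | ⟨b, s⟩; · simp at hm
      simp only [incHead, List.cons.injEq] at h
      obtain ⟨h1, h2⟩ := h
      have hab : a = b := by omega
      subst hab; subst h2; rfl
    · rcases l with _ | ⟨a, t⟩; · simp at hl
      rcases m with _ | ⟨b, s⟩; · simp at hm
      have ha : 1 ≤ a := head_pos hl.1 hl.2
      simp only [incHead, List.cons.injEq] at h
      obtain ⟨h1, h2⟩ := h
      omega
    · rcases l with _ | ⟨a, t⟩; · simp at hl
      rcases m with _ | ⟨b, s⟩; · simp at hm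
      have hb : 1 ≤ b := head_pos hm.1 hm.2
      simp only [incHead, List.cons.injEq] at h
      obtain ⟨h1, h2⟩ := h
      omega
    · rcases l with _ | ⟨a, t⟩; · simp at hl
      rcases m with _ | ⟨b, s⟩; · simp at hm
      simp only [incHead, List.cons.injEq] at h
      obtain ⟨-, h1, h2⟩ := h
      have hab : a = b := by omega
      subst hab; subst h2; rfl
  · rintro ⟨l, hq, hs⟩
    rcases l with _ | ⟨a, t⟩; · simp at hs
    have ha : 1 ≤ a := head_pos hq hs
    rcases Nat.lt_or_ge a 2 with ha2 | ha2
    · -- a = 1, use inr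
      obtain rfl : a = 1 := by omega
      rcases t with _ | ⟨b, t'⟩
      · simp at hs
      · have hb : 2 ≤ b := by
          rcases t' with _ | ⟨c, t''⟩
          · simp [List.sum_cons] at hs; omega
          · have := hq.2 1 (by omega) (by simp)
            simp at this; omega
        obtain ⟨c, rfl⟩ : ∃ c, b = c + 2 := ⟨b - 2, by omega⟩
        refine ⟨Sum.inr ⟨(c + 1) :: t', ⟨?_, ?_⟩, ?_⟩, ?_⟩
        · intro x hx
          rcases t' with _ | ⟨d, t''⟩
          · simp at hx
          · rw [List.dropLast_cons₂] at hx
            rcases List.mem_cons.mp hx with rfl | hx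
            · omega
            · refine hq.1 x ?_
              rw [List.dropLast_cons₂, List.dropLast_cons₂]
              simp [hx]
        · intro i h1 h2
          obtain ⟨j, rfl⟩ : ∃ j, i = j + 1 := ⟨i - 1, by omega⟩
          have := hq.2 (j + 2) (by omega) (by simp at h2 ⊢; omega)
          simpa using this
        · simp [List.sum_cons] at hs ⊢; omega
        · simp [gmap, incHead]
    · -- a ≥ 2, use inl
      obtain ⟨b, rfl⟩ : ∃ b, a = b + 2 := ⟨a - 2, by omega⟩
      refine ⟨Sum.inl ⟨(b + 1) :: t, ⟨?_, ?_⟩, ?_⟩, ?_⟩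
      · intro x hx
        rcases t with _ | ⟨d, t''⟩
        · simp at hx
        · rw [List.dropLast_cons₂] at hx
          rcases List.mem_cons.mp hx with rfl | hx
          · omega
          · exact hq.1 x (by rw [List.dropLast_cons₂]; simp [hx])
      · intro i h1 h2
        obtain ⟨j, rfl⟩ : ∃ j, i = j + 1 := ⟨i - 1, by omega⟩
        have := hq.2 (j + 1) (by omega) (by simpa using h2)
        simpa using this
      · simp [List.sum_cons] at hs ⊢; omega
      · simp [gmap, incHead]

lemma mem1 (l : List ℕ) : (Qc l ∧ l.sum = 1) ↔ l ∈ ({[1], [1, 0]} : Set (List ℕ)) := by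
  constructor
  · rintro ⟨hq, hs⟩
    rcases l with _ | ⟨a, _ | ⟨b, _ | ⟨c, t⟩⟩⟩
    · simp at hs
    · simp at hs; simp [hs]
    · have ha : 0 < a := hq.1 a (by simp)
      simp only [List.sum_cons, List.sum_nil] at hs
      have : a = 1 ∧ b = 0 := by omega
      simp [this.1, this.2]
    · have ha : 0 < a := hq.1 a (by simp [List.dropLast_cons₂])
      have hb : 0 < b := hq.1 b (by simp [List.dropLast_cons₂])
      simp only [List.sum_cons] at hs
      omega
  · rintro (rfl | rfl)
    · exact ⟨⟨by simp, by intro i h1 h2; simp at h2⟩, by simp⟩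
    · exact ⟨⟨by simp, by intro i h1 h2; simp at h2; omega⟩, by simp⟩

lemma mem2 (l : List ℕ) : (Qc l ∧ l.sum = 2) ↔ l ∈ ({[2], [2, 0], [1, 1]} : Set (List ℕ)) := by
  constructor
  · rintro ⟨hq, hs⟩
    rcases l with _ | ⟨a, _ | ⟨b, _ | ⟨c, t⟩⟩⟩
    · simp at hs
    · simp at hs; simp [hs]
    · have ha : 0 < a := hq.1 a (by simp)
      simp only [List.sum_cons, List.sum_nil] at hs
      have : (a = 2 ∧ b = 0) ∨ (a = 1 ∧ b = 1) := by omega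
      rcases this with ⟨rfl, rfl⟩ | ⟨rfl, rfl⟩ <;> simp
    · have ha : 0 < a := hq.1 a (by simp [List.dropLast_cons₂])
      have hb : 1 < b := hq.2 1 (by omega) (by simp)
      simp only [List.sum_cons] at hs
      omega
  · rintro (rfl | rfl | rfl)
    · exact ⟨⟨by simp, by intro i h1 h2; simp at h2⟩, by simp⟩
    · exact ⟨⟨by simp, by intro i h1 h2; simp at h2; omega⟩, by simp⟩
    · exact ⟨⟨by simp, by intro i h1 h2; simp at h2; omega⟩, by simp⟩

lemma card1 : Nat.card {l : List ℕ // Qc l ∧ l.sum = 1} = 2 := by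
  rw [Nat.card_congr (Equiv.subtypeEquivRight mem1), Nat.card_coe_set_eq,
    Set.ncard_pair (by simp)]

lemma card2 : Nat.card {l : List ℕ // Qc l ∧ l.sum = 2} = 3 := by
  rw [Nat.card_congr (Equiv.subtypeEquivRight mem2), Nat.card_coe_set_eq,
    Set.ncard_insert_of_notMem (by simp), Set.ncard_pair (by simp)]

lemma cardT : ∀ n : ℕ, Nat.card {l : List ℕ // Qc l ∧ l.sum = n + 1} = fibP (n + 2) := by
  intro n
  induction n using Nat.strong_induction_on with
  | _ n ih =>
    match n with
    | 0 => rw [card1]; rfl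
    | 1 => rw [card2]; rfl
    | (m + 2) =>
      have e := Nat.card_congr (Equiv.ofBijective _ (gmap_bij m)).symm
      rw [Nat.card_sum] at e
      show Nat.card {l : List ℕ // Qc l ∧ l.sum = m + 3} = fibP (m + 2 + 2)
      rw [e, show m + 2 = (m + 1) + 1 from rfl, ih (m + 1) (by omega), ih m (by omega)]
      rfl

theorem stmt3 (n : ℕ) (hn : 1 ≤ n) :
    Nat.card {l : List ℕ // (∀ x ∈ l.tail, 0 < x) ∧ l.sum = n ∧
      ∀ i, 0 < i → i + 1 < l.length → 1 < l.getD i 0} = fibP (n + 1) := by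
  obtain ⟨m, rfl⟩ : ∃ m, n = m + 1 := ⟨n - 1, by omega⟩
  rw [Nat.card_congr (revEquiv (m + 1))]
  exact cardT m
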